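/- Let A be an abelian group (written multiplicatively), M a type, and m̄ ∈ M a fixed element. For n ≥ 2 let i_n : M^n → M^{n+1} be the map (m₁,…,m_n) ↦ (m̄, m₁,…,m_n). Then for every α : M^n → A one has the contracting-homotopy identity (∂α) ∘ i_n = α^{-1} · ∂(α^{-1} ∘ i_{n-1}), as functions M^n → A. -/
import Mathlib


/-- The alternating-omission (Čech/simplicial) differential on `A`-valued
functions on finite powers of `M`: for `α : Mⁿ → A`,
`∂α(m₁,…,m_{n+1}) = ∏_{j=1}^{n+1} α(m₁,…,m̂_j,…,m_{n+1})^{(-1)^j}`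
(the `j`-th factor in Lean's 0-indexing carries the sign `(-1)^{j+1}`). -/
def altOmissionDiff {M : Type*} {A : Type*} [CommGroup A] {n : ℕ}
    (α : (Fin n → M) → A) : (Fin (n + 1) → M) → A :=
  fun m => ∏ j : Fin (n + 1), (α (m ∘ j.succAbove)) ^ ((-1 : ℤ) ^ ((j : ℕ) + 1))

/-- For `n = k + 2 ≥ 2` and the inclusions `i_n : Mⁿ → M^{n+1}`,
`(m₁,…,m_n) ↦ (m̄, m₁,…,m_n)` (given by `Fin.cons m̄`), every `α : Mⁿ → A`
satisfies the contracting-homotopy identity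
`(∂α) ∘ i_n = α⁻¹ · ∂(α⁻¹ ∘ i_{n-1})` pointwise on `Mⁿ`. -/
theorem altOmissionDiff_cons {M : Type*} {A : Type*} [CommGroup A]
    (mbar : M) (k : ℕ) (α : (Fin (k + 2) → M) → A) (m : Fin (k + 2) → M) :
    altOmissionDiff α (Fin.cons mbar m) =
      (α m)⁻¹ *
        altOmissionDiff (fun x : Fin (k + 1) → M => (α (Fin.cons mbar x))⁻¹) m := by
  unfold altOmissionDiff
  rw [Fin.prod_univ_succ]
  congr 1
  · have h : (Fin.cons mbar m : Fin (k + 3) → M) ∘ Fin.succ = m := by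
      funext i; simp
    simp [Fin.succAbove, h]
  · apply Finset.prod_congr rfl
    intro i _
    have h : (Fin.cons mbar m : Fin (k + 3) → M) ∘ Fin.succAbove i.succ =
        Fin.cons mbar (m ∘ Fin.succAbove i) := by
      funext j
      cases j using Fin.cases with
      | zero => simp [Fin.succAbove_of_castSucc_lt, Fin.castSucc_zero]
      | succ j => simp [Fin.succ_succAbove_succ]
    rw [h]
    rw [inv_zpow]
    rw [← zpow_neg]
    congr 1
    rw [Fin.val_succ]
    ring
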